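/- Define Φ : S^{n-1} × ℝ → ℝ^{n+2} by Φ(x,θ) = (cos θ, sin θ, x). Then: (i) Q(Φ(x,θ)) = 0 for every unit vector x and every θ; (ii) ⟨Φ(x,θ) | Φ(x',θ')⟩ = ⟨x,x'⟩ − cos(θ−θ') for all unit vectors x, x' and reals θ, θ'; (iii) if |θ−θ'| ≤ π, then ⟨Φ(x,θ) | Φ(x',θ')⟩ ≤ 0 if and only if |θ−θ'| ≤ arccos⟨x,x'⟩; (iv) if |θ−θ'| < π, then ⟨Φ(x,θ) | Φ(x',θ')⟩ < 0 if and only if |θ−θ'| < arccos⟨x,x'⟩. (This is the paper's criterion: a subset of the Einstein universe contained in a de Sitter domain is achronal, resp. strictly achronal, if and only if all pairwise scalar products of representative null vectors are nonpositive, resp. negative.) -/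

import Mathlib

open scoped RealInnerProductSpace

/-- The polar bilinear form of the quadratic form
`Q(u, v, x) = -u² - v² + ‖x‖²` of signature `(2, n)` on `ℝ × ℝ × ℝⁿ`. -/
noncomputable def polarForm (n : ℕ) (p q : ℝ × ℝ × EuclideanSpace ℝ (Fin n)) : ℝ :=
  -(p.1 * q.1) - p.2.1 * q.2.1 + ⟪p.2.2, q.2.2⟫

/-- The map `Φ(x, θ) = (cos θ, sin θ, x)` from `S^{n-1} × ℝ` to the null cone of
`Q` in `ℝ^{n+2}`. -/
noncomputable def PhiEin (n : ℕ) (x : EuclideanSpace ℝ (Fin n)) (θ : ℝ) :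
    ℝ × ℝ × EuclideanSpace ℝ (Fin n) :=
  (Real.cos θ, Real.sin θ, x)

/-- `Φ(x,θ)` is a null vector, `⟪Φ(x,θ) | Φ(x',θ')⟫ = ⟪x,x'⟫ - cos (θ-θ')`,
and for `|θ-θ'| ≤ π` (resp. `< π`), the scalar product is nonpositive (resp. negative)
iff `|θ-θ'| ≤ arccos ⟪x,x'⟫` (resp. `<`): the causality criterion in a de Sitter
domain of the Einstein universe. -/
theorem einstein_null_lift_criterion (n : ℕ) (hn : 2 ≤ n)
    (x x' : EuclideanSpace ℝ (Fin n)) (hx : ‖x‖ = 1) (hx' : ‖x'‖ = 1) (θ θ' : ℝ) :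
    polarForm n (PhiEin n x θ) (PhiEin n x θ) = 0 ∧
    polarForm n (PhiEin n x θ) (PhiEin n x' θ') = ⟪x, x'⟫ - Real.cos (θ - θ') ∧
    (|θ - θ'| ≤ Real.pi →
      (polarForm n (PhiEin n x θ) (PhiEin n x' θ') ≤ 0 ↔
        |θ - θ'| ≤ Real.arccos ⟪x, x'⟫)) ∧
    (|θ - θ'| < Real.pi →
      (polarForm n (PhiEin n x θ) (PhiEin n x' θ') < 0 ↔
        |θ - θ'| < Real.arccos ⟪x, x'⟫)) := by
  have hxx : ⟪x, x⟫ = 1 := by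
    rw [real_inner_self_eq_norm_sq, hx]; norm_num
  have hval : polarForm n (PhiEin n x θ) (PhiEin n x' θ') = ⟪x, x'⟫ - Real.cos (θ - θ') := by
    simp only [polarForm, PhiEin, Real.cos_sub]
    ring
  have hbound : |⟪x, x'⟫| ≤ 1 := by
    have := abs_real_inner_le_norm x x'
    rwa [hx, hx', mul_one] at this
  have h1 : -1 ≤ ⟪x, x'⟫ := neg_le_of_abs_le hbound
  have h2 : ⟪x, x'⟫ ≤ 1 := le_of_abs_le hbound
  have hcos : Real.cos (Real.arccos ⟪x, x'⟫) = ⟪x, x'⟫ := Real.cos_arccos h1 h2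
  have hmem : Real.arccos ⟪x, x'⟫ ∈ Set.Icc 0 Real.pi :=
    ⟨Real.arccos_nonneg _, Real.arccos_le_pi _⟩
  have habs : Real.cos (θ - θ') = Real.cos |θ - θ'| := (Real.cos_abs _).symm
  refine ⟨?_, hval, ?_, ?_⟩
  · simp only [polarForm, PhiEin, hxx]
    nlinarith [Real.sin_sq_add_cos_sq θ]
  · intro hle
    rw [hval, sub_nonpos, habs]
    constructor
    · intro h
      rw [← hcos] at h
      exact (Real.strictAntiOn_cos.le_iff_ge hmem ⟨abs_nonneg _, hle⟩).mp h
    · intro h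
      rw [← hcos]
      exact (Real.strictAntiOn_cos.le_iff_ge hmem ⟨abs_nonneg _, hle⟩).mpr h
  · intro hlt
    rw [hval, sub_neg, habs]
    constructor
    · intro h
      rw [← hcos] at h
      exact (Real.strictAntiOn_cos.lt_iff_gt hmem ⟨abs_nonneg _, hlt.le⟩).mp h
    · intro h
      rw [← hcos]
      exact (Real.strictAntiOn_cos.lt_iff_gt hmem ⟨abs_nonneg _, hlt.le⟩).mpr h
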